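/- Let A and B be finitely generated groups, let G = A × B, and let H be a finite index subgroup of G. Then d(H) ≤ d(G)·([G : AH] + [AH : H]), where A is identified with A × {1} and AH denotes the subgroup {ah : a ∈ A, h ∈ H} of G. -/

import Mathlib

/-- `d K` is the least cardinality of a (finite) generating set of the group `K`. -/
noncomputable def minGens (K : Type*) [Group K] : ℕ :=
  sInf {n : ℕ | ∃ S : Finset K, S.card = n ∧ Subgroup.closure (S : Set K) = ⊤}

open Subgroup Pointwise

/-- `minGens` agrees with `Group.rank` on finitely generated groups. -/
lemma minGens_eq_rank (K : Type*) [Group K] [Group.FG K] : minGens K = Group.rank K := by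
  have hmem : Group.rank K ∈ {n : ℕ | ∃ S : Finset K, S.card = n ∧
      Subgroup.closure (S : Set K) = ⊤} := by
    obtain ⟨S, h1, h2⟩ := Group.rank_spec K
    exact ⟨S, h1, h2⟩
  refine le_antisymm (Nat.sInf_le hmem) ?_
  obtain ⟨S, h1, h2⟩ := Nat.sInf_mem (⟨_, hmem⟩ : Set.Nonempty _)
  exact (Group.rank_le h2).trans_eq h1

/-- Products of f.g. groups are f.g. -/
instance prod_fg (A B : Type*) [Group A] [Group B] [Group.FG A] [Group.FG B] :
    Group.FG (A × B) := by
  obtain ⟨SA, hSA, hSAfin⟩ := Group.fg_iff.mp ‹Group.FG A›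
  obtain ⟨SB, hSB, hSBfin⟩ := Group.fg_iff.mp ‹Group.FG B›
  refine Group.fg_iff.mpr ⟨(MonoidHom.inl A B) '' SA ∪ (MonoidHom.inr A B) '' SB, ?_,
    (hSAfin.image _).union (hSBfin.image _)⟩
  rw [Subgroup.closure_union, ← MonoidHom.map_closure, ← MonoidHom.map_closure, hSA, hSB]
  refine top_unique fun x _ => ?_
  have hx : x = MonoidHom.inl A B x.1 * MonoidHom.inr A B x.2 := by
    simp [Prod.ext_iff]
  rw [hx]
  exact mul_mem (mem_sup_left (Subgroup.mem_map_of_mem _ trivial))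
    (mem_sup_right (Subgroup.mem_map_of_mem _ trivial))

/-- If `A` is normal, `[A ⊔ H : H] = [A : A ⊓ H]`. -/
lemma relindex_sup_of_normal {G : Type*} [Group G] (A H : Subgroup G) [A.Normal] :
    H.relIndex (A ⊔ H) = H.relIndex A := by
  rw [relIndex, relIndex, index_eq_card, index_eq_card]
  refine (Nat.card_congr ?_).symm
  refine Equiv.ofBijective
    (Quotient.map' (Subgroup.inclusion (le_sup_left : A ≤ A ⊔ H)) ?_) ⟨?_, ?_⟩
  · intro a b hab
    rw [QuotientGroup.leftRel_apply] at hab ⊢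
    exact hab
  · intro x y
    induction x using Quotient.inductionOn'
    induction y using Quotient.inductionOn'
    intro hxy
    rw [Quotient.map'_mk'', Quotient.map'_mk''] at hxy
    rw [Quotient.eq''] at hxy ⊢
    rw [QuotientGroup.leftRel_apply] at hxy ⊢
    exact hxy
  · intro x
    induction x using Quotient.inductionOn' with
    | h k =>
      obtain ⟨k, hk⟩ := k
      have : k ∈ (A : Set G) * (H : Set G) := by rw [← Subgroup.normal_mul]; exact hk
      obtain ⟨a, ha, h, hh, rfl⟩ := this
      refine ⟨Quotient.mk'' ⟨a, ha⟩, ?_⟩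
      rw [Quotient.map'_mk'', Quotient.eq'', QuotientGroup.leftRel_apply]
      show (↑(Subgroup.inclusion _ ⟨a, ha⟩))⁻¹ * (a * h) ∈ H
      simpa using hh

/-- Rank of an extension is at most rank of kernel plus rank of quotient. -/
lemma rank_le_rank_add_rank_quotient {H : Type*} [Group H] [Group.FG H] (N : Subgroup H)
    [N.Normal] [Group.FG N] [Group.FG (H ⧸ N)] :
    Group.rank H ≤ Group.rank N + Group.rank (H ⧸ N) := by
  classical
  obtain ⟨S, hScard, hSgen⟩ := Group.rank_spec N
  obtain ⟨T, hTcard, hTgen⟩ := Group.rank_spec (H ⧸ N)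
  set U : Finset H := S.image N.subtype ∪ T.image Quotient.out with hU
  set P : Subgroup H := Subgroup.closure (U : Set H) with hP
  have hNP : N ≤ P := by
    have h1 : Subgroup.map N.subtype ⊤ = N := by
      rw [← MonoidHom.range_eq_map, Subgroup.range_subtype]
    calc N = Subgroup.map N.subtype (Subgroup.closure (S : Set N)) := by rw [hSgen, h1]
    _ = Subgroup.closure (N.subtype '' (S : Set N)) := (MonoidHom.map_closure _ _)
    _ ≤ P := Subgroup.closure_mono (by
        intro x hx
        simp only [hU, Finset.coe_union, Finset.coe_image]
        exact Set.mem_union_left _ hx)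
  have hmap : Subgroup.map (QuotientGroup.mk' N) P = ⊤ := by
    rw [hP, MonoidHom.map_closure]
    refine top_unique ?_
    rw [← hTgen]
    refine Subgroup.closure_mono ?_
    intro t ht
    refine ⟨t.out, ?_, QuotientGroup.out_eq' t⟩
    simp only [hU, Finset.coe_union, Finset.coe_image]
    exact Set.mem_union_right _ ⟨t, ht, rfl⟩
  have hPtop : P = ⊤ := by
    have h2 := Subgroup.comap_map_eq_self
      (f := QuotientGroup.mk' N) (H := P) (by rwa [QuotientGroup.ker_mk'])
    rw [hmap, Subgroup.comap_top] at h2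
    exact h2.symm
  calc Group.rank H ≤ U.card := Group.rank_le (hP ▸ hPtop)
  _ ≤ (S.image N.subtype).card + (T.image Quotient.out).card := Finset.card_union_le _ _
  _ ≤ S.card + T.card := add_le_add Finset.card_image_le Finset.card_image_le
  _ = Group.rank N + Group.rank (H ⧸ N) := by rw [hScard, hTcard]

theorem stmt8 {A B : Type*} [Group A] [Group B] [Group.FG A] [Group.FG B]
    (H : Subgroup (A × B)) (hH : H.FiniteIndex) :
    minGens H ≤ minGens (A × B) *
      (((MonoidHom.inl A B).range ⊔ H).index +
        H.relIndex ((MonoidHom.inl A B).range ⊔ H)) := by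
  classical
  set A' : Subgroup (A × B) := (MonoidHom.inl A B).range with hA'
  set K : Subgroup (A × B) := A' ⊔ H with hK
  haveI : A'.Normal := by
    have : A' = (MonoidHom.snd A B).ker := by
      ext ⟨a, b⟩
      simp only [hA', MonoidHom.mem_range, MonoidHom.mem_ker]
      constructor
      · rintro ⟨a', h⟩
        exact (congrArg Prod.snd h).symm
      · intro hx
        have hb : b = 1 := hx
        subst hb
        exact ⟨a, rfl⟩
    rw [this]; infer_instance
  haveI hHfi : H.FiniteIndex := hH
  haveI hKfi : K.FiniteIndex := ⟨fun h => hH.index_ne_zero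
    (Nat.eq_zero_of_zero_dvd (h ▸ Subgroup.index_dvd_of_le (le_sup_right : H ≤ K)))⟩
  haveI : Group.FG H := Subgroup.fg_of_index_ne_zero H
  -- relIndex facts
  have hrel : H.relIndex A' = H.relIndex K := (relindex_sup_of_normal A' H).symm
  have hrelK_ne : H.relIndex K ≠ 0 := fun h => hH.index_ne_zero (by
    rw [← Subgroup.relIndex_mul_index (le_sup_right : H ≤ K), h, zero_mul])
  -- Step 2 : rank of A' ⊓ H side
  haveI : (H.subgroupOf A').FiniteIndex := ⟨by
    show H.relIndex A' ≠ 0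
    rw [hrel]; exact hrelK_ne⟩
  haveI : Group.FG A' := Group.fg_range _
  haveI : Group.FG (H.subgroupOf A') := Subgroup.fg_of_index_ne_zero _
  have hstep2 : Group.rank (H.subgroupOf A') ≤ H.relIndex K * Group.rank (A × B) := by
    calc Group.rank (H.subgroupOf A') ≤ (H.subgroupOf A').index * Group.rank A' :=
          Subgroup.rank_le_index_mul_rank _
    _ = H.relIndex A' * Group.rank A' := rfl
    _ = H.relIndex K * Group.rank A' := by rw [hrel]
    _ ≤ H.relIndex K * Group.rank (A × B) := by
        refine Nat.mul_le_mul_left _ ?_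
        calc Group.rank A' ≤ Group.rank A := Group.rank_range_le (f := MonoidHom.inl A B)
        _ ≤ Group.rank (A × B) :=
            Group.rank_le_of_surjective (MonoidHom.fst A B) (fun a => ⟨(a, 1), rfl⟩)
  -- the isomorphism  A'.subgroupOf H ≃* H.subgroupOf A'
  have e1 : A'.subgroupOf H ≃* H.subgroupOf A' := by
    have h1 : A'.subgroupOf H = (A' ⊓ H).subgroupOf H := (Subgroup.inf_subgroupOf_right _ _).symm
    have h2 : H.subgroupOf A' = (A' ⊓ H).subgroupOf A' := by
      rw [inf_comm, Subgroup.inf_subgroupOf_right]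
    rw [h1, h2]
    exact (Subgroup.subgroupOfEquivOfLe inf_le_right).trans
      (Subgroup.subgroupOfEquivOfLe inf_le_left).symm
  haveI : Group.FG (A'.subgroupOf H) := Group.fg_of_surjective (f := e1.symm.toMonoidHom)
    e1.symm.surjective
  have hQ : Group.rank (A'.subgroupOf H) ≤ H.relIndex K * Group.rank (A × B) :=
    (le_of_eq (Group.rank_congr e1)).trans hstep2
  -- Step 3 : quotient side
  have hKK : H ⊔ A' = K := by rw [hK, sup_comm]
  haveI hLfi : (H ⊔ A').FiniteIndex := by rw [hKK]; exact hKfi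
  haveI : Group.FG ↥(H ⊔ A' : Subgroup (A × B)) := Subgroup.fg_of_index_ne_zero _
  have e2 : (H ⧸ A'.subgroupOf H) ≃* (↥(H ⊔ A') ⧸ A'.subgroupOf (H ⊔ A')) :=
    QuotientGroup.quotientInfEquivProdNormalQuotient H A'
  haveI : Group.FG (↥(H ⊔ A') ⧸ A'.subgroupOf (H ⊔ A')) :=
    Group.fg_of_surjective (f := QuotientGroup.mk' _) (QuotientGroup.mk'_surjective _)
  haveI : Group.FG (H ⧸ A'.subgroupOf H) :=
    Group.fg_of_surjective (f := e2.symm.toMonoidHom) e2.symm.surjective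
  have hquot : Group.rank (H ⧸ A'.subgroupOf H) ≤ K.index * Group.rank (A × B) := by
    have h3 : Group.rank (↥(H ⊔ A') ⧸ A'.subgroupOf (H ⊔ A')) ≤
        Group.rank ↥(H ⊔ A' : Subgroup (A × B)) :=
      Group.rank_le_of_surjective (QuotientGroup.mk' _) (QuotientGroup.mk'_surjective _)
    have h4 : Group.rank ↥(H ⊔ A' : Subgroup (A × B)) ≤
        (H ⊔ A').index * Group.rank (A × B) := Subgroup.rank_le_index_mul_rank _
    have h5 : (H ⊔ A').index = K.index := by rw [hKK]
    calc Group.rank (H ⧸ A'.subgroupOf H)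
        = Group.rank (↥(H ⊔ A') ⧸ A'.subgroupOf (H ⊔ A')) := Group.rank_congr e2
    _ ≤ (H ⊔ A').index * Group.rank (A × B) := h3.trans h4
    _ = K.index * Group.rank (A × B) := by rw [h5]
  -- put everything together
  have hmain : Group.rank H ≤ Group.rank (A'.subgroupOf H) + Group.rank (H ⧸ A'.subgroupOf H) :=
    rank_le_rank_add_rank_quotient (A'.subgroupOf H)
  rw [minGens_eq_rank, minGens_eq_rank]
  calc Group.rank H ≤ Group.rank (A'.subgroupOf H) + Group.rank (H ⧸ A'.subgroupOf H) := hmain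
  _ ≤ H.relIndex K * Group.rank (A × B) + K.index * Group.rank (A × B) := add_le_add hQ hquot
  _ = Group.rank (A × B) * (K.index + H.relIndex K) := by ring
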